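/- Let A be an associative algebra over a field k and f : A → k a linear functional. Then f vanishes on a two-sided ideal of A of finite codimension if and only if f vanishes on a left ideal of A of finite codimension. -/

import Mathlib

/-- A linear functional `f : A → k` on an associative unital `k`-algebra
vanishes on a two-sided ideal of finite codimension if and only if it vanishes on a
left ideal of finite codimension. Ideals are `k`-subspaces; codimension is finiteness
of the `k`-dimension of the quotient vector space. -/
theorem stmt0 {k A : Type*} [Field k] [Ring A] [Algebra k A] (f : A →ₗ[k] k) :
    (∃ I : Submodule k A, (∀ (a : A), ∀ x ∈ I, a * x ∈ I) ∧ (∀ (a : A), ∀ x ∈ I, x * a ∈ I) ∧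
      FiniteDimensional k (A ⧸ I) ∧ ∀ x ∈ I, f x = 0) ↔
    (∃ J : Submodule k A, (∀ (a : A), ∀ x ∈ J, a * x ∈ J) ∧
      FiniteDimensional k (A ⧸ J) ∧ ∀ x ∈ J, f x = 0) := by
  constructor
  · rintro ⟨I, hl, _, hfin, hf⟩
    exact ⟨I, hl, hfin, hf⟩
  · rintro ⟨J, hJl, hJfin, hJf⟩
    -- the map sending `a` to left multiplication by `a` on `A ⧸ J`
    let φ : A →ₗ[k] (A ⧸ J →ₗ[k] A ⧸ J) :=
      { toFun := fun a => Submodule.mapQ J J (LinearMap.mulLeft k a)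
          (@id (J ≤ J.comap (LinearMap.mulLeft k a)) (fun x hx => hJl a x hx))
        map_add' := by
          intro a b
          apply LinearMap.ext
          intro x
          obtain ⟨y, rfl⟩ := Submodule.Quotient.mk_surjective J x
          simp [Submodule.mapQ_apply, add_mul]
        map_smul' := by
          intro c a
          apply LinearMap.ext
          intro x
          obtain ⟨y, rfl⟩ := Submodule.Quotient.mk_surjective J x
          simp [Submodule.mapQ_apply, Algebra.smul_mul_assoc] }
    have hφ : ∀ a : A, a ∈ LinearMap.ker φ ↔ ∀ b : A, a * b ∈ J := by
      intro a
      constructor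
      · intro ha b
        have := LinearMap.congr_fun (LinearMap.mem_ker.mp ha) (Submodule.Quotient.mk b)
        simpa [φ, Submodule.mapQ_apply, Submodule.Quotient.mk_eq_zero] using this
      · intro ha
        apply LinearMap.mem_ker.mpr
        apply LinearMap.ext
        intro x
        obtain ⟨y, rfl⟩ := Submodule.Quotient.mk_surjective J x
        simpa [φ, Submodule.mapQ_apply, Submodule.Quotient.mk_eq_zero] using ha y
    have hsub : ∀ a ∈ LinearMap.ker φ, a ∈ J := by
      intro a ha
      simpa using (hφ a).mp ha 1
    haveI : FiniteDimensional k (A ⧸ J →ₗ[k] A ⧸ J) := inferInstance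
    haveI : FiniteDimensional k (A ⧸ LinearMap.ker φ) :=
      Module.Finite.equiv φ.quotKerEquivRange.symm
    refine ⟨LinearMap.ker φ, ?_, ?_, ?_, ?_⟩
    · intro a x hx
      rw [hφ] at hx ⊢
      intro b
      rw [mul_assoc]
      exact hJl a _ (hx b)
    · intro a x hx
      rw [hφ] at hx ⊢
      intro b
      rw [mul_assoc]
      exact hx (a * b)
    · infer_instance
    · intro x hx
      exact hJf x (hsub x hx)
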